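/- For every λ > 0 and every state x ∈ S, the optimal risk-sensitive average cost satisfies the min–max equation J*(λ,x) = min_{a ∈ A(x)} max{ J*(λ,y) : y ∈ S, p_{xy}(a) > 0 }. -/

import Mathlib

open scoped Classical BigOperators ENNReal

namespace RiskSensitive

/-- A (history-dependent, randomized) policy for a finite MDP: given the past
(chronological list of (state, action) pairs) and the current state, it assigns a
probability weight to each action, concentrated on the admissible actions. -/
structure Policy (S A : Type*) [Fintype S] [Fintype A] (Adm : S → Finset A) where
  toFun : List (S × A) → S → A → ℝ
  nonneg : ∀ h s a, 0 ≤ toFun h s a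
  sum_one : ∀ h s, ∑ a, toFun h s a = 1
  supp : ∀ h s a, a ∉ Adm s → toFun h s a = 0

variable {S A : Type*} [Fintype S] [Fintype A]
variable (Adm : S → Finset A) (p : S → A → S → ℝ) (C : S → A → ℝ) (lam : ℝ)

/-- Probability of a finite trajectory (list of (action, next-state) pairs), given the
history so far and the current state. -/
noncomputable def pathProbAux (π : Policy S A Adm) :
    List (S × A) → S → List (A × S) → ℝ
  | _, _, [] => 1
  | hist, x, (a, y) :: rest =>
      π.toFun hist x a * p x a y * pathProbAux π (hist ++ [(x, a)]) y rest

/-- `pathProb π x l` is `P_x^π[A_0 = a_0, X_1 = y_1, …]` for `l = [(a_0,y_1),…]`. -/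
noncomputable def pathProb (π : Policy S A Adm) (x : S) (l : List (A × S)) : ℝ :=
  pathProbAux Adm p π [] x l

/-- Probability of a cylinder event depending on the first `n` (action, next-state) pairs. -/
noncomputable def cylProb (π : Policy S A Adm) (x : S) (n : ℕ)
    (E : (Fin n → A × S) → Prop) : ℝ :=
  ∑ v : Fin n → A × S, if E v then pathProb Adm p π x (List.ofFn v) else 0

/-- The state `X_t` along the trajectory encoded by `l`, starting from `x`. -/
def stateAt (x : S) (l : List (A × S)) (t : ℕ) : S :=
  (l.take t).foldl (fun _ q => q.2) x

/-- The final state of the finite trajectory `l` started at `x`. -/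
def lastState (x : S) (l : List (A × S)) : S :=
  l.foldl (fun _ q => q.2) x

/-- `Σ_t w(X_t, A_t)` along the finite trajectory `l` started at `x`. -/
def costSum (w : S → A → ℝ) : S → List (A × S) → ℝ
  | _, [] => 0
  | x, (a, y) :: rest => w x a + costSum w y rest

/-- `J_n(λ,π,x) = (1/λ) log E_x^π[exp(λ Σ_{t<n} C(X_t,A_t))]`. -/
noncomputable def Jn (π : Policy S A Adm) (x : S) (n : ℕ) : ℝ :=
  (1 / lam) * Real.log (∑ v : Fin n → A × S,
    pathProb Adm p π x (List.ofFn v) * Real.exp (lam * costSum C x (List.ofFn v)))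

/-- The risk-sensitive average cost `J(λ,π,x) = limsup_n J_n(λ,π,x)/n`. -/
noncomputable def Javg (π : Policy S A Adm) (x : S) : ℝ :=
  Filter.limsup (fun n : ℕ => Jn Adm p C lam π x n / n) Filter.atTop

/-- Optimal risk-sensitive average cost `J*(λ,x)`. -/
noncomputable def Jopt (x : S) : ℝ :=
  ⨅ π : Policy S A Adm, Javg Adm p C lam π x

/-- `π` is `ε`-optimal at `x`. -/
def EpsOptimalAt (π : Policy S A Adm) (x : S) (ε : ℝ) : Prop :=
  Javg Adm p C lam π x ≤ Jopt Adm p C lam x + ε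

/-- `FirstExit Q v` : the trajectory `v` leaves `{Q}` for the first time exactly at its
last step, i.e. the exit time of `Q` equals `n`. -/
def FirstExit (Q : S → Prop) {n : ℕ} (v : Fin n → A × S) : Prop :=
  0 < n ∧ (∀ t : Fin n, (t : ℕ) + 1 < n → Q (v t).2) ∧
    ∀ t : Fin n, (t : ℕ) + 1 = n → ¬ Q (v t).2

/-- `E_x^π[ exp(Σ_{t<τ} w(X_t,A_t)) ]` where `τ = min{n ≥ 1 : ¬ Q (X_n)}` is the first
exit time from `Q` (the contribution of `[τ = ∞]` is null when `τ < ∞` a.s.). -/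
noncomputable def EexitExp (π : Policy S A Adm) (x : S) (Q : S → Prop)
    (w : S → A → ℝ) : ℝ≥0∞ :=
  ∑' n : ℕ, ∑ v : Fin n → A × S,
    if FirstExit Q v then
      ENNReal.ofReal (pathProb Adm p π x (List.ofFn v) *
        Real.exp (costSum w x (List.ofFn v)))
    else 0

/-- `E_x^π[ exp(Σ_{t<T} w(X_t,A_t)) ]` with `T` the first positive arrival time to `z`. -/
noncomputable def EhitExp (π : Policy S A Adm) (x z : S) (w : S → A → ℝ) : ℝ≥0∞ :=
  EexitExp Adm p π x (fun y => y ≠ z) w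

/-- `E_x^π[T]`, the expected first positive arrival time to `z`, computed as
`Σ_{n≥0} P_x^π[T > n]`. -/
noncomputable def ExpT (π : Policy S A Adm) (x z : S) : ℝ≥0∞ :=
  ∑' n : ℕ, ENNReal.ofReal
    (cylProb Adm p π x n (fun v => ∀ t : Fin n, (v t).2 ≠ z))

/-- `P_x^π[T > n]`, the probability that `z` is not visited during the first `n` steps. -/
noncomputable def survProb (π : Policy S A Adm) (x z : S) (n : ℕ) : ℝ :=
  cylProb Adm p π x n (fun v => ∀ t : Fin n, (v t).2 ≠ z)

/-- The stationary policy induced by a choice function `f ∈ 𝔽`. -/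
noncomputable def stationary (f : S → A) (hf : ∀ s, f s ∈ Adm s) : Policy S A Adm where
  toFun := fun _ s a => if a = f s then 1 else 0
  nonneg := by intro h s a; (try dsimp only); split <;> norm_num
  sum_one := by intro h s; simp
  supp := by
    intro h s a ha
    try dsimp only
    rw [if_neg]
    intro hEq
    exact ha (hEq ▸ hf s)

/-- The simultaneous Doeblin condition: `E_x^f[T] ≤ M` for every state `x` and every
stationary policy `f`, where `T` is the first positive arrival time to `z`. -/
def Doeblin (z : S) (M : ℝ) : Prop :=
  0 < M ∧ ∀ (x : S) (f : S → A) (hf : ∀ s, f s ∈ Adm s),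
    ExpT Adm p (stationary Adm f hf) x z ≤ ENNReal.ofReal M

/-- `B_g(x) = {a ∈ A(x) : g(x) = max{g(y) : p_{xy}(a) > 0}}`. -/
def Bg (g : S → ℝ) (x : S) : Set A :=
  {a | a ∈ Adm x ∧ g x = sSup (g '' {y | 0 < p x a y})}

/-- The family `𝒢` of functions characterizing `J*(λ,·)`. -/
def Gclass : Set (S → ℝ) :=
  {g | (∀ x, g x = sInf ((fun a => sSup (g '' {y | 0 < p x a y})) '' (Adm x : Set A))) ∧
    ∃ h : S → ℝ, ∀ x,
      sInf ((fun a => Real.exp (lam * C x a) * ∑ y, p x a y * Real.exp (lam * h y)) ''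
        Bg Adm p g x) ≤ Real.exp (lam * g x + lam * h x)}

/-- The class `𝒫*` of policies which always select actions in `B*(X_t)`. -/
def Pstar : Set (Policy S A Adm) :=
  {π | ∀ (x : S) (t : ℕ),
    cylProb Adm p π x (t + 1)
      (fun v => (v (Fin.last t)).1 ∈
        Bg Adm p (Jopt Adm p C lam) (stateAt x (List.ofFn v) t)) = 1}

/-- The deviation function
`h(x) = inf_{π ∈ 𝒫*} (1/λ) log E_x^π[exp(λα Σ_{t<T}(C(X_t,A_t) − J*(λ,X_t)))]`. -/
noncomputable def hdev (z : S) (α : ℝ) (x : S) : EReal :=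
  ⨅ π ∈ Pstar Adm p C lam, ((lam⁻¹ : ℝ) : EReal) *
    ENNReal.log (EhitExp Adm p π x z
      (fun s a => lam * α * (C s a - Jopt Adm p C lam s)))

/-- `ψ(ε) = (1/λ) inf_{δ∈𝒫*} log E_z^δ[exp(λ Σ_{t<T}(C(X_t,A_t) − γ₀ − 2ε))]`. -/
noncomputable def psi (z : S) (ε : ℝ) : EReal :=
  ((lam⁻¹ : ℝ) : EReal) * ⨅ π ∈ Pstar Adm p C lam,
    ENNReal.log (EhitExp Adm p π z z
      (fun s a => lam * (C s a - Jopt Adm p C lam z - 2 * ε)))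

/-- `ξ₀ = −(1−α) log β / (λα)`. -/
noncomputable def xi0 (α β : ℝ) : ℝ := -((1 - α) * Real.log β) / (lam * α)

/-- `ξ₁`: 1 if `J*(λ,·)` is constant, otherwise the minimum gap between distinct
values of `J*(λ,·)`. -/
noncomputable def xi1 : ℝ :=
  if ∀ u v : S, Jopt Adm p C lam u = Jopt Adm p C lam v then 1
  else sInf {d | ∃ u v : S, Jopt Adm p C lam u < Jopt Adm p C lam v ∧
    d = Jopt Adm p C lam v - Jopt Adm p C lam u}

/-- `ξ = min{ξ₀, ξ₁}`. -/
noncomputable def xi (α β : ℝ) : ℝ := min (xi0 lam α β) (xi1 Adm p C lam)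

/-- The shifted policy obtained by prefixing the fixed history `pre`. -/
def shiftPolicy (π : Policy S A Adm) (pre : List (S × A)) : Policy S A Adm where
  toFun := fun h s a => π.toFun (pre ++ h) s a
  nonneg := fun h s a => π.nonneg _ s a
  sum_one := fun h s => π.sum_one _ s
  supp := fun h s a ha => π.supp _ s a ha

/-- The history (list of (state, action) pairs) along the trajectory `l` started at `x`. -/
def histOf : S → List (A × S) → List (S × A)
  | _, [] => []
  | x, (a, y) :: rest => (x, a) :: histOf y rest


/-! ### Auxiliary lemmas for the min–max equation -/

lemma pathProbAux_nonneg
    (hp : ∀ (x : S), ∀ a ∈ Adm x, (∀ y, 0 ≤ p x a y) ∧ (∑ y, p x a y) = 1)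
    (π : Policy S A Adm) :
    ∀ (l : List (A × S)) (h : List (S × A)) (s : S), 0 ≤ pathProbAux Adm p π h s l := by
  intro l
  induction l with
  | nil => intro h s; simp [pathProbAux]
  | cons q rest ih =>
    intro h s
    obtain ⟨a, y⟩ := q
    show 0 ≤ π.toFun h s a * p s a y * pathProbAux Adm p π (h ++ [(s, a)]) y rest
    by_cases ha : a ∈ Adm s
    · exact mul_nonneg (mul_nonneg (π.nonneg h s a) ((hp s a ha).1 y)) (ih _ _)
    · simp [π.supp h s a ha]

lemma pathProbAux_shift (π : Policy S A Adm) :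
    ∀ (l : List (A × S)) (pre h : List (S × A)) (s : S),
      pathProbAux Adm p (shiftPolicy Adm π pre) h s l = pathProbAux Adm p π (pre ++ h) s l := by
  intro l
  induction l with
  | nil => intros; rfl
  | cons q rest ih =>
    intro pre h s
    obtain ⟨a, y⟩ := q
    show (shiftPolicy Adm π pre).toFun h s a * p s a y *
        pathProbAux Adm p (shiftPolicy Adm π pre) (h ++ [(s, a)]) y rest
      = π.toFun (pre ++ h) s a * p s a y *
        pathProbAux Adm p π ((pre ++ h) ++ [(s, a)]) y rest
    rw [ih, List.append_assoc]
    rfl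

/-- The sum `Sn` appearing inside the `log` in `Jn` (with general cost `w`). -/
noncomputable def Sn (w : S → A → ℝ) (π : Policy S A Adm) (x : S) (n : ℕ) : ℝ :=
  ∑ v : Fin n → A × S,
    pathProb Adm p π x (List.ofFn v) * Real.exp (lam * costSum w x (List.ofFn v))

lemma Jn_eq (π : Policy S A Adm) (x : S) (n : ℕ) :
    Jn Adm p C lam π x n = (1 / lam) * Real.log (Sn Adm p lam C π x n) := rfl

lemma Sn_zero (w : S → A → ℝ) (π : Policy S A Adm) (x : S) :
    Sn Adm p lam w π x 0 = 1 := by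
  simp [Sn, Finset.univ_unique, List.ofFn_zero, pathProb, pathProbAux, costSum]

lemma Sn_succ (w : S → A → ℝ) (π : Policy S A Adm) (x : S) (n : ℕ) :
    Sn Adm p lam w π x (n + 1) =
      ∑ a, ∑ y, π.toFun [] x a * p x a y * Real.exp (lam * w x a) *
        Sn Adm p lam w (shiftPolicy Adm π [(x, a)]) y n := by
  rw [Sn, ← Equiv.sum_comp (Fin.consEquiv fun _ : Fin (n + 1) => A × S),
    Fintype.sum_prod_type, Fintype.sum_prod_type]
  refine Finset.sum_congr rfl fun a _ => Finset.sum_congr rfl fun y _ => ?_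
  rw [Sn, Finset.mul_sum]
  refine Finset.sum_congr rfl fun v _ => ?_
  have h1 : (Fin.consEquiv fun _ : Fin (n + 1) => A × S) ((a, y), v) = Fin.cons (a, y) v := rfl
  rw [h1]
  have h2 : List.ofFn (Fin.cons ((a, y) : A × S) v) = (a, y) :: List.ofFn v := by
    simp [List.ofFn_succ]
  rw [h2]
  have h3 : pathProb Adm p π x ((a, y) :: List.ofFn v)
      = π.toFun [] x a * p x a y * pathProbAux Adm p π [(x, a)] y (List.ofFn v) := rfl
  have h4 : pathProbAux Adm p π [(x, a)] y (List.ofFn v)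
      = pathProb Adm p (shiftPolicy Adm π [(x, a)]) y (List.ofFn v) := by
    have h5 := pathProbAux_shift Adm p π (List.ofFn v) [(x, a)] [] y
    rw [List.append_nil] at h5
    exact h5.symm
  have h5 : costSum w x ((a, y) :: List.ofFn v) = w x a + costSum w y (List.ofFn v) := rfl
  rw [h3, h4, h5, mul_add, Real.exp_add]
  ring

lemma costSum_zero : ∀ (l : List (A × S)) (x : S), costSum (fun _ _ => (0 : ℝ)) x l = 0 := by
  intro l
  induction l with
  | nil => intro x; rfl
  | cons q rest ih =>
    intro x
    obtain ⟨a, y⟩ := q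
    show (0 : ℝ) + costSum (fun _ _ => (0 : ℝ)) y rest = 0
    rw [ih, add_zero]

lemma Sn_mass
    (hp : ∀ (x : S), ∀ a ∈ Adm x, (∀ y, 0 ≤ p x a y) ∧ (∑ y, p x a y) = 1) :
    ∀ (n : ℕ) (π : Policy S A Adm) (x : S), Sn Adm p lam (fun _ _ => 0) π x n = 1 := by
  intro n
  induction n with
  | zero => intro π x; exact Sn_zero Adm p lam _ π x
  | succ n ih =>
    intro π x
    rw [Sn_succ]
    have key : ∀ a : A, ∑ y, π.toFun [] x a * p x a y = π.toFun [] x a := by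
      intro a
      by_cases ha : a ∈ Adm x
      · rw [← Finset.mul_sum, (hp x a ha).2, mul_one]
      · simp [π.supp [] x a ha]
    calc (∑ a, ∑ y, π.toFun [] x a * p x a y * Real.exp (lam * (fun _ _ => (0:ℝ)) x a) *
          Sn Adm p lam (fun _ _ => 0) (shiftPolicy Adm π [(x, a)]) y n)
        = ∑ a, ∑ y, π.toFun [] x a * p x a y := by
          refine Finset.sum_congr rfl fun a _ => Finset.sum_congr rfl fun y _ => ?_
          rw [ih]
          show π.toFun [] x a * p x a y * Real.exp (lam * 0) * 1 = _
          rw [mul_zero, Real.exp_zero, mul_one, mul_one]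
      _ = ∑ a, π.toFun [] x a := Finset.sum_congr rfl fun a _ => key a
      _ = 1 := π.sum_one [] x

lemma sum_pathProb
    (hp : ∀ (x : S), ∀ a ∈ Adm x, (∀ y, 0 ≤ p x a y) ∧ (∑ y, p x a y) = 1)
    (π : Policy S A Adm) (x : S) (n : ℕ) :
    ∑ v : Fin n → A × S, pathProb Adm p π x (List.ofFn v) = 1 := by
  have h := Sn_mass Adm p 1 hp n π x
  rw [Sn] at h
  calc ∑ v : Fin n → A × S, pathProb Adm p π x (List.ofFn v)
      = ∑ v : Fin n → A × S, pathProb Adm p π x (List.ofFn v) *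
          Real.exp (1 * costSum (fun _ _ => 0) x (List.ofFn v)) := by
        refine Finset.sum_congr rfl fun v _ => ?_
        rw [costSum_zero, mul_zero, Real.exp_zero, mul_one]
    _ = 1 := h

lemma Sn_term_nonneg
    (hp : ∀ (x : S), ∀ a ∈ Adm x, (∀ y, 0 ≤ p x a y) ∧ (∑ y, p x a y) = 1)
    (w : S → A → ℝ) (π : Policy S A Adm) (x : S) (n : ℕ)
    (hS : ∀ (π' : Policy S A Adm) (y : S), 0 ≤ Sn Adm p lam w π' y n) (a : A) (y : S) :
    0 ≤ π.toFun [] x a * p x a y * Real.exp (lam * w x a) *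
      Sn Adm p lam w (shiftPolicy Adm π [(x, a)]) y n := by
  by_cases ha : a ∈ Adm x
  · exact mul_nonneg (mul_nonneg (mul_nonneg (π.nonneg [] x a) ((hp x a ha).1 y))
      (Real.exp_pos _).le) (hS _ y)
  · simp [π.supp [] x a ha]

lemma exists_pos_action (π : Policy S A Adm) (x : S) (h : List (S × A)) :
    ∃ a, 0 < π.toFun h x a ∧ a ∈ Adm x := by
  have hex : ∃ a, 0 < π.toFun h x a := by
    by_contra hcon
    push_neg at hcon
    have hz : ∑ a, π.toFun h x a = 0 :=
      Finset.sum_eq_zero fun a _ => le_antisymm (hcon a) (π.nonneg h x a)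
    rw [π.sum_one h x] at hz
    norm_num at hz
  obtain ⟨a, ha⟩ := hex
  refine ⟨a, ha, ?_⟩
  by_contra hc
  rw [π.supp h x a hc] at ha
  exact lt_irrefl _ ha

lemma exists_pos_next
    (hp : ∀ (x : S), ∀ a ∈ Adm x, (∀ y, 0 ≤ p x a y) ∧ (∑ y, p x a y) = 1)
    {x : S} {a : A} (ha : a ∈ Adm x) : ∃ y, 0 < p x a y := by
  by_contra hcon
  push_neg at hcon
  have hz : ∑ y, p x a y = 0 :=
    Finset.sum_eq_zero fun y _ => le_antisymm (hcon y) ((hp x a ha).1 y)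
  rw [(hp x a ha).2] at hz
  norm_num at hz

lemma Sn_pos
    (hp : ∀ (x : S), ∀ a ∈ Adm x, (∀ y, 0 ≤ p x a y) ∧ (∑ y, p x a y) = 1)
    (w : S → A → ℝ) :
    ∀ (n : ℕ) (π : Policy S A Adm) (x : S), 0 < Sn Adm p lam w π x n := by
  intro n
  induction n with
  | zero => intro π x; rw [Sn_zero]; norm_num
  | succ n ih =>
    intro π x
    rw [Sn_succ]
    obtain ⟨a, hapos, haAdm⟩ := exists_pos_action Adm π x []
    obtain ⟨y, hy⟩ := exists_pos_next Adm p hp haAdm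
    have hnn := Sn_term_nonneg Adm p lam hp w π x n (fun π' y' => (ih π' y').le)
    refine Finset.sum_pos' (fun a' _ => Finset.sum_nonneg fun y' _ => hnn a' y')
      ⟨a, Finset.mem_univ a, ?_⟩
    refine Finset.sum_pos' (fun y' _ => hnn a y') ⟨y, Finset.mem_univ y, ?_⟩
    exact mul_pos (mul_pos (mul_pos hapos hy) (Real.exp_pos _)) (ih _ y)

lemma costSum_le {w : S → A → ℝ} {M : ℝ} (hM : ∀ s a, w s a ≤ M) :
    ∀ (l : List (A × S)) (x : S), costSum w x l ≤ l.length * M := by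
  intro l
  induction l with
  | nil => intro x; simp [costSum]
  | cons q rest ih =>
    intro x
    obtain ⟨a, y⟩ := q
    have h := ih y
    show w x a + costSum w y rest ≤ (rest.length + 1 : ℕ) * M
    push_cast
    have := hM x a
    nlinarith [hM x a]

lemma costSum_ge {w : S → A → ℝ} {m : ℝ} (hm : ∀ s a, m ≤ w s a) :
    ∀ (l : List (A × S)) (x : S), (l.length : ℝ) * m ≤ costSum w x l := by
  intro l
  induction l with
  | nil => intro x; simp [costSum]
  | cons q rest ih =>
    intro x
    obtain ⟨a, y⟩ := q
    have h := ih y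
    show ((rest.length + 1 : ℕ) : ℝ) * m ≤ w x a + costSum w y rest
    push_cast
    nlinarith [hm x a]

lemma Sn_le
    (hp : ∀ (x : S), ∀ a ∈ Adm x, (∀ y, 0 ≤ p x a y) ∧ (∑ y, p x a y) = 1)
    (hlam : 0 < lam) {M : ℝ} (hM : ∀ s a, C s a ≤ M)
    (π : Policy S A Adm) (x : S) (n : ℕ) :
    Sn Adm p lam C π x n ≤ Real.exp (lam * (n * M)) := by
  rw [Sn]
  calc (∑ v : Fin n → A × S,
        pathProb Adm p π x (List.ofFn v) * Real.exp (lam * costSum C x (List.ofFn v)))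
      ≤ ∑ v : Fin n → A × S, pathProb Adm p π x (List.ofFn v) * Real.exp (lam * (n * M)) := by
        refine Finset.sum_le_sum fun v _ => ?_
        refine mul_le_mul_of_nonneg_left ?_ (pathProbAux_nonneg Adm p hp π _ [] x)
        refine Real.exp_le_exp.mpr (mul_le_mul_of_nonneg_left ?_ hlam.le)
        have := costSum_le hM (List.ofFn v) x
        rwa [List.length_ofFn] at this
    _ = Real.exp (lam * (n * M)) := by
        rw [← Finset.sum_mul, sum_pathProb Adm p hp π x n, one_mul]

lemma Sn_ge
    (hp : ∀ (x : S), ∀ a ∈ Adm x, (∀ y, 0 ≤ p x a y) ∧ (∑ y, p x a y) = 1)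
    (hlam : 0 < lam) {m : ℝ} (hm : ∀ s a, m ≤ C s a)
    (π : Policy S A Adm) (x : S) (n : ℕ) :
    Real.exp (lam * (n * m)) ≤ Sn Adm p lam C π x n := by
  rw [Sn]
  calc Real.exp (lam * (n * m))
      = ∑ v : Fin n → A × S, pathProb Adm p π x (List.ofFn v) * Real.exp (lam * (n * m)) := by
        rw [← Finset.sum_mul, sum_pathProb Adm p hp π x n, one_mul]
    _ ≤ ∑ v : Fin n → A × S,
        pathProb Adm p π x (List.ofFn v) * Real.exp (lam * costSum C x (List.ofFn v)) := by
        refine Finset.sum_le_sum fun v _ => ?_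
        refine mul_le_mul_of_nonneg_left ?_ (pathProbAux_nonneg Adm p hp π _ [] x)
        refine Real.exp_le_exp.mpr (mul_le_mul_of_nonneg_left ?_ hlam.le)
        have := costSum_ge hm (List.ofFn v) x
        rwa [List.length_ofFn] at this

lemma Jn_le
    (hp : ∀ (x : S), ∀ a ∈ Adm x, (∀ y, 0 ≤ p x a y) ∧ (∑ y, p x a y) = 1)
    (hlam : 0 < lam) {M : ℝ} (hM : ∀ s a, C s a ≤ M)
    (π : Policy S A Adm) (x : S) (n : ℕ) :
    Jn Adm p C lam π x n ≤ n * M := by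
  rw [Jn_eq]
  have h1 : Real.log (Sn Adm p lam C π x n) ≤ lam * (n * M) := by
    have := Real.log_le_log (Sn_pos Adm p lam hp C n π x) (Sn_le Adm p C lam hp hlam hM π x n)
    rwa [Real.log_exp] at this
  calc (1 / lam) * Real.log (Sn Adm p lam C π x n) ≤ (1 / lam) * (lam * (n * M)) := by
        exact mul_le_mul_of_nonneg_left h1 (by positivity)
    _ = n * M := by field_simp

lemma Jn_ge
    (hp : ∀ (x : S), ∀ a ∈ Adm x, (∀ y, 0 ≤ p x a y) ∧ (∑ y, p x a y) = 1)
    (hlam : 0 < lam) {m : ℝ} (hm : ∀ s a, m ≤ C s a)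
    (π : Policy S A Adm) (x : S) (n : ℕ) :
    (n : ℝ) * m ≤ Jn Adm p C lam π x n := by
  rw [Jn_eq]
  have h1 : lam * (n * m) ≤ Real.log (Sn Adm p lam C π x n) := by
    have := Real.log_le_log (Real.exp_pos _) (Sn_ge Adm p C lam hp hlam hm π x n)
    rwa [Real.log_exp] at this
  calc (n : ℝ) * m = (1 / lam) * (lam * (n * m)) := by field_simp
    _ ≤ (1 / lam) * Real.log (Sn Adm p lam C π x n) :=
        mul_le_mul_of_nonneg_left h1 (by positivity)

/-- The first state of a history (or the current state for an empty history). -/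
def fstState : List (S × A) → S → S
  | [], s => s
  | q :: _, _ => q.1

lemma fstState_append (h : List (S × A)) (s y : S) (a : A) :
    fstState (h ++ [(s, a)]) y = fstState h s := by
  cases h <;> rfl

/-- The policy that plays `a₀` at time 0 and thereafter follows `Ps y`, where `y` is the
state reached at time 1. -/
noncomputable def compose (a₀ : S → A) (h₀ : ∀ s, a₀ s ∈ Adm s)
    (Ps : S → Policy S A Adm) : Policy S A Adm where
  toFun h s a :=
    match h with
    | [] => if a = a₀ s then 1 else 0
    | _ :: h' => (Ps (fstState h' s)).toFun h' s a
  nonneg h s a := by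
    cases h with
    | nil => dsimp only; split <;> norm_num
    | cons q h' => exact (Ps (fstState h' s)).nonneg h' s a
  sum_one h s := by
    cases h with
    | nil => simp
    | cons q h' => exact (Ps (fstState h' s)).sum_one h' s
  supp h s a ha := by
    cases h with
    | nil =>
      dsimp only
      rw [if_neg]
      intro hEq
      exact ha (hEq ▸ h₀ s)
    | cons q h' => exact (Ps (fstState h' s)).supp h' s a ha

lemma compose_aux (a₀ : S → A) (h₀ : ∀ s, a₀ s ∈ Adm s) (Ps : S → Policy S A Adm) :
    ∀ (l : List (A × S)) (q : S × A) (h : List (S × A)) (s : S),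
      pathProbAux Adm p (compose Adm a₀ h₀ Ps) (q :: h) s l
        = pathProbAux Adm p (Ps (fstState h s)) h s l := by
  intro l
  induction l with
  | nil => intros; rfl
  | cons qq rest ih =>
    intro q h s
    obtain ⟨a, y⟩ := qq
    show (compose Adm a₀ h₀ Ps).toFun (q :: h) s a * p s a y *
        pathProbAux Adm p (compose Adm a₀ h₀ Ps) ((q :: h) ++ [(s, a)]) y rest
      = (Ps (fstState h s)).toFun h s a * p s a y *
        pathProbAux Adm p (Ps (fstState h s)) (h ++ [(s, a)]) y rest
    have h2 : ((q :: h) ++ [(s, a)] : List (S × A)) = q :: (h ++ [(s, a)]) := rfl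
    rw [h2, ih, fstState_append]
    rfl

lemma Sn_compose (w : S → A → ℝ) (a₀ : S → A) (h₀ : ∀ s, a₀ s ∈ Adm s)
    (Ps : S → Policy S A Adm) (x y : S) (a : A) (n : ℕ) :
    Sn Adm p lam w (shiftPolicy Adm (compose Adm a₀ h₀ Ps) [(x, a)]) y n
      = Sn Adm p lam w (Ps y) y n := by
  rw [Sn, Sn]
  refine Finset.sum_congr rfl fun v _ => ?_
  congr 1
  rw [pathProb, pathProbAux_shift, List.append_nil]
  exact compose_aux Adm p a₀ h₀ Ps (List.ofFn v) (x, a) [] y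

lemma Sn_succ_compose (w : S → A → ℝ) (a₀ : S → A) (h₀ : ∀ s, a₀ s ∈ Adm s)
    (Ps : S → Policy S A Adm) (x : S) (n : ℕ) :
    Sn Adm p lam w (compose Adm a₀ h₀ Ps) x (n + 1)
      = Real.exp (lam * w x (a₀ x)) *
          ∑ y, p x (a₀ x) y * Sn Adm p lam w (Ps y) y n := by
  rw [Sn_succ]
  have hrow : ∀ a : A,
      (∑ y, (compose Adm a₀ h₀ Ps).toFun [] x a * p x a y * Real.exp (lam * w x a) *
        Sn Adm p lam w (shiftPolicy Adm (compose Adm a₀ h₀ Ps) [(x, a)]) y n)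
      = if a = a₀ x then
          Real.exp (lam * w x (a₀ x)) * ∑ y, p x (a₀ x) y * Sn Adm p lam w (Ps y) y n
        else 0 := by
    intro a
    have htf : ∀ a : A, (compose Adm a₀ h₀ Ps).toFun [] x a = if a = a₀ x then 1 else 0 :=
      fun a => rfl
    by_cases hae : a = a₀ x
    · subst hae
      rw [if_pos rfl, Finset.mul_sum]
      refine Finset.sum_congr rfl fun y _ => ?_
      rw [Sn_compose, htf, if_pos rfl]
      ring
    · rw [if_neg hae]
      refine Finset.sum_eq_zero fun y _ => ?_
      rw [htf, if_neg hae]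
      ring
  rw [Finset.sum_congr rfl fun a _ => hrow a, Finset.sum_ite_eq' Finset.univ (a₀ x),
    if_pos (Finset.mem_univ _)]

/-- Abstract limsup step lemma, "≥" direction. -/
lemma limsup_step_ge (u v : ℕ → ℝ) (d : ℝ)
    (hrec : ∀ n : ℕ, v n + d ≤ u (n + 1))
    (hub : Filter.IsBoundedUnder (· ≤ ·) Filter.atTop (fun n : ℕ => u n / n))
    (hcb : Filter.IsCoboundedUnder (· ≤ ·) Filter.atTop (fun n : ℕ => v n / n)) :
    Filter.limsup (fun n : ℕ => v n / n) Filter.atTop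
      ≤ Filter.limsup (fun n : ℕ => u n / n) Filter.atTop := by
  by_contra hlt
  push_neg at hlt
  set L := Filter.limsup (fun n : ℕ => u n / n) Filter.atTop with hL
  set b := Filter.limsup (fun n : ℕ => v n / n) Filter.atTop with hb
  set b'' := (L + b) / 2 with hb''
  have h1 : L < b'' := by rw [hb'']; linarith
  have h2 : b'' < b := by rw [hb'']; linarith
  set c := (L + b'') / 2 with hc
  have hc1 : L < c := by rw [hc]; linarith
  have hc2 : c < b'' := by rw [hc]; linarith
  obtain ⟨N₁, hN₁⟩ := exists_nat_gt ((b'' - d) / (b'' - c))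
  have hfreq := Filter.frequently_lt_of_lt_limsup hcb h2
  have hfreq2 : ∃ᶠ m in Filter.atTop, c ≤ u m / m := by
    rw [Filter.frequently_atTop] at hfreq ⊢
    intro N
    obtain ⟨n, hn, hvn⟩ := hfreq (max N (max N₁ 1))
    have hnN : N ≤ n := le_trans (le_max_left _ _) hn
    have hnN₁ : N₁ ≤ n := le_trans (le_trans (le_max_left _ _) (le_max_right _ _)) hn
    have hn1 : 1 ≤ n := le_trans (le_trans (le_max_right _ _) (le_max_right _ _)) hn
    refine ⟨n + 1, by omega, ?_⟩
    have hnpos : (0 : ℝ) < n := by exact_mod_cast hn1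
    have hv : b'' * n < v n := (lt_div_iff₀ hnpos).mp hvn
    have hu := hrec n
    have hnn : (0 : ℝ) < (n : ℝ) + 1 := by positivity
    have hcast : ((n + 1 : ℕ) : ℝ) = (n : ℝ) + 1 := by push_cast; ring
    rw [hcast, le_div_iff₀ hnn]
    have h5 : (b'' - d) / (b'' - c) < (n : ℝ) + 1 := by
      calc (b'' - d) / (b'' - c) < (N₁ : ℝ) := hN₁
        _ ≤ (n : ℝ) := by exact_mod_cast hnN₁
        _ ≤ (n : ℝ) + 1 := by linarith
    have h6 : b'' - d < ((n : ℝ) + 1) * (b'' - c) :=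
      (div_lt_iff₀ (show (0:ℝ) < b'' - c by linarith)).mp h5
    nlinarith [hv, hu, h6]
  have hfin := Filter.le_limsup_of_frequently_le hfreq2 hub
  rw [← hL] at hfin
  linarith

/-- Abstract limsup step lemma, "≤" direction. -/
lemma limsup_step_le (u w : ℕ → ℝ) (d b : ℝ)
    (hrec : ∀ n : ℕ, u (n + 1) ≤ d + w n)
    (hev : ∀ b' : ℝ, b < b' → ∀ᶠ n : ℕ in Filter.atTop, w n ≤ b' * n)
    (hcb : Filter.IsCoboundedUnder (· ≤ ·) Filter.atTop (fun n : ℕ => u n / n)) :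
    Filter.limsup (fun n : ℕ => u n / n) Filter.atTop ≤ b := by
  refine le_of_forall_gt_imp_ge_of_dense fun b2 hb2 => ?_
  set b1 := (b + b2) / 2 with hb1def
  have hb1a : b < b1 := by rw [hb1def]; linarith
  have hb1b : b1 < b2 := by rw [hb1def]; linarith
  obtain ⟨N, hN⟩ := Filter.eventually_atTop.mp (hev b1 hb1a)
  obtain ⟨N₂, hN₂⟩ := exists_nat_gt ((d - b2) / (b2 - b1))
  refine Filter.limsup_le_of_le hcb ?_
  rw [Filter.eventually_atTop]
  refine ⟨N + N₂ + 1, fun m hm => ?_⟩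
  obtain ⟨n, rfl⟩ : ∃ n, m = n + 1 := ⟨m - 1, by omega⟩
  have hnN : N ≤ n := by omega
  have hnN₂ : N₂ ≤ n := by omega
  have hw := hN n hnN
  have hu := hrec n
  have hnn : (0 : ℝ) < (n : ℝ) + 1 := by positivity
  have hcast : ((n + 1 : ℕ) : ℝ) = (n : ℝ) + 1 := by push_cast; ring
  rw [hcast, div_le_iff₀ hnn]
  have h5 : (d - b2) / (b2 - b1) < (n : ℝ) := by
    calc (d - b2) / (b2 - b1) < (N₂ : ℝ) := hN₂
      _ ≤ (n : ℝ) := by exact_mod_cast hnN₂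
  have h6 : d - b2 < (n : ℝ) * (b2 - b1) :=
    (div_lt_iff₀ (show (0:ℝ) < b2 - b1 by linarith)).mp h5
  nlinarith [hw, hu, h6]

/-- the min–max equation for the optimal risk-sensitive average cost. -/
theorem minmax_equation
    (hA : ∀ x, (Adm x).Nonempty)
    (hp : ∀ (x : S), ∀ a ∈ Adm x, (∀ y, 0 ≤ p x a y) ∧ (∑ y, p x a y) = 1)
    (hlam : 0 < lam) (x : S) :
    Jopt Adm p C lam x =
      sInf ((fun a => sSup (Jopt Adm p C lam '' {y | 0 < p x a y})) '' (Adm x : Set A)) := by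
  classical
  have hPne : Nonempty (Policy S A Adm) :=
    ⟨stationary Adm (fun s => (hA s).choose) (fun s => (hA s).choose_spec)⟩
  obtain ⟨M, hM⟩ : ∃ M : ℝ, ∀ (s : S) (a : A), C s a ≤ M := by
    obtain ⟨M, hM⟩ := (Set.finite_range fun q : S × A => C q.1 q.2).bddAbove
    exact ⟨M, fun s a => hM ⟨(s, a), rfl⟩⟩
  obtain ⟨m0, hm0⟩ : ∃ m0 : ℝ, ∀ (s : S) (a : A), m0 ≤ C s a := by
    obtain ⟨m0, hm0⟩ := (Set.finite_range fun q : S × A => C q.1 q.2).bddBelow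
    exact ⟨m0, fun s a => hm0 ⟨(s, a), rfl⟩⟩
  have hevle : ∀ (π : Policy S A Adm) (y : S),
      ∀ᶠ n : ℕ in Filter.atTop, Jn Adm p C lam π y n / n ≤ M := by
    intro π y
    rw [Filter.eventually_atTop]
    refine ⟨1, fun n hn => ?_⟩
    have hnpos : (0 : ℝ) < n := by exact_mod_cast hn
    rw [div_le_iff₀ hnpos]
    calc Jn Adm p C lam π y n ≤ n * M := Jn_le Adm p C lam hp hlam hM π y n
      _ = M * n := by ring
  have hevge : ∀ (π : Policy S A Adm) (y : S),
      ∀ᶠ n : ℕ in Filter.atTop, m0 ≤ Jn Adm p C lam π y n / n := by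
    intro π y
    rw [Filter.eventually_atTop]
    refine ⟨1, fun n hn => ?_⟩
    have hnpos : (0 : ℝ) < n := by exact_mod_cast hn
    rw [le_div_iff₀ hnpos]
    calc m0 * n = n * m0 := by ring
      _ ≤ Jn Adm p C lam π y n := Jn_ge Adm p C lam hp hlam hm0 π y n
  have hub : ∀ (π : Policy S A Adm) (y : S), Filter.IsBoundedUnder (· ≤ ·) Filter.atTop
      (fun n : ℕ => Jn Adm p C lam π y n / n) :=
    fun π y => ⟨M, by rw [Filter.eventually_map]; exact hevle π y⟩
  have hcb_le : ∀ (π : Policy S A Adm) (y : S), Filter.IsCoboundedUnder (· ≤ ·) Filter.atTop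
      (fun n : ℕ => Jn Adm p C lam π y n / n) :=
    fun π y => Filter.isCoboundedUnder_le_of_eventually_le _ (hevge π y)
  have hJavg_eq : ∀ (π : Policy S A Adm) (y : S), Javg Adm p C lam π y =
      Filter.limsup (fun n : ℕ => Jn Adm p C lam π y n / n) Filter.atTop := fun _ _ => rfl
  have hJavg_ge : ∀ (π : Policy S A Adm) (y : S), m0 ≤ Javg Adm p C lam π y := by
    intro π y
    rw [hJavg_eq]
    exact Filter.le_limsup_of_frequently_le ((hevge π y).frequently) (hub π y)
  have hbddJ : ∀ y : S, BddBelow (Set.range fun π : Policy S A Adm => Javg Adm p C lam π y) :=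
    fun y => ⟨m0, by rintro _ ⟨π, rfl⟩; exact hJavg_ge π y⟩
  have hJopt_eq : ∀ y : S, Jopt Adm p C lam y = ⨅ π : Policy S A Adm, Javg Adm p C lam π y :=
    fun _ => rfl
  -- Direction A : sInf ≤ Jopt
  have dirA : sInf ((fun a => sSup (Jopt Adm p C lam '' {y | 0 < p x a y})) '' (Adm x : Set A))
      ≤ Jopt Adm p C lam x := by
    rw [hJopt_eq]
    refine le_ciInf fun π => ?_
    obtain ⟨a, hapos, haAdm⟩ := exists_pos_action Adm π x []
    have hbddB : BddBelow
        ((fun a => sSup (Jopt Adm p C lam '' {y | 0 < p x a y})) '' (Adm x : Set A)) :=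
      ((Adm x : Set A).toFinite.image _).bddBelow
    refine le_trans (csInf_le hbddB ⟨a, haAdm, rfl⟩) ?_
    obtain ⟨y0, hy0⟩ := exists_pos_next Adm p hp haAdm
    refine csSup_le ⟨Jopt Adm p C lam y0, ⟨y0, hy0, rfl⟩⟩ ?_
    rintro b ⟨y, hy, rfl⟩
    have hJy : Jopt Adm p C lam y ≤ Javg Adm p C lam (shiftPolicy Adm π [(x, a)]) y := by
      rw [hJopt_eq]
      exact ciInf_le (hbddJ y) _
    refine hJy.trans ?_
    have hdd : 0 < π.toFun [] x a * p x a y * Real.exp (lam * C x a) :=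
      mul_pos (mul_pos hapos hy) (Real.exp_pos _)
    set d : ℝ := (1 / lam) * Real.log (π.toFun [] x a * p x a y * Real.exp (lam * C x a))
      with hd
    have hrec : ∀ n : ℕ, Jn Adm p C lam (shiftPolicy Adm π [(x, a)]) y n + d
        ≤ Jn Adm p C lam π x (n + 1) := by
      intro n
      have hnn := Sn_term_nonneg Adm p lam hp C π x n
        (fun π' y' => (Sn_pos Adm p lam hp C n π' y').le)
      have hterm : π.toFun [] x a * p x a y * Real.exp (lam * C x a) *
          Sn Adm p lam C (shiftPolicy Adm π [(x, a)]) y n ≤ Sn Adm p lam C π x (n + 1) := by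
        rw [Sn_succ]
        calc π.toFun [] x a * p x a y * Real.exp (lam * C x a) *
              Sn Adm p lam C (shiftPolicy Adm π [(x, a)]) y n
            ≤ ∑ y', π.toFun [] x a * p x a y' * Real.exp (lam * C x a) *
                Sn Adm p lam C (shiftPolicy Adm π [(x, a)]) y' n :=
              Finset.single_le_sum (fun y' _ => hnn a y') (Finset.mem_univ y)
          _ ≤ ∑ a', ∑ y', π.toFun [] x a' * p x a' y' * Real.exp (lam * C x a') *
                Sn Adm p lam C (shiftPolicy Adm π [(x, a')]) y' n :=
              Finset.single_le_sum
                (fun a' _ => Finset.sum_nonneg fun y' _ => hnn a' y') (Finset.mem_univ a)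
      have hpos1 : 0 < Sn Adm p lam C (shiftPolicy Adm π [(x, a)]) y n :=
        Sn_pos Adm p lam hp C n _ y
      have hlog : Real.log (π.toFun [] x a * p x a y * Real.exp (lam * C x a)) +
          Real.log (Sn Adm p lam C (shiftPolicy Adm π [(x, a)]) y n)
          ≤ Real.log (Sn Adm p lam C π x (n + 1)) := by
        rw [← Real.log_mul hdd.ne' hpos1.ne']
        exact Real.log_le_log (mul_pos hdd hpos1) hterm
      rw [Jn_eq, Jn_eq, hd]
      calc (1 / lam) * Real.log (Sn Adm p lam C (shiftPolicy Adm π [(x, a)]) y n) +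
            (1 / lam) * Real.log (π.toFun [] x a * p x a y * Real.exp (lam * C x a))
          = (1 / lam) * (Real.log (π.toFun [] x a * p x a y * Real.exp (lam * C x a)) +
              Real.log (Sn Adm p lam C (shiftPolicy Adm π [(x, a)]) y n)) := by ring
        _ ≤ (1 / lam) * Real.log (Sn Adm p lam C π x (n + 1)) :=
            mul_le_mul_of_nonneg_left hlog (by positivity)
    have := limsup_step_ge (fun n => Jn Adm p C lam π x n)
      (fun n => Jn Adm p C lam (shiftPolicy Adm π [(x, a)]) y n) d hrec (hub π x)
      (hcb_le _ y)
    rw [hJavg_eq, hJavg_eq]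
    exact this
  -- Direction B : Jopt ≤ sInf
  have dirB : Jopt Adm p C lam x ≤
      sInf ((fun a => sSup (Jopt Adm p C lam '' {y | 0 < p x a y})) '' (Adm x : Set A)) := by
    refine le_csInf ?_ ?_
    · obtain ⟨a₁, ha₁⟩ := hA x
      exact ⟨_, ⟨a₁, ha₁, rfl⟩⟩
    rintro b ⟨a, haAdm, rfl⟩
    have hp0 : ∀ y : S, 0 ≤ p x a y := (hp x a haAdm).1
    obtain ⟨y0, hy0⟩ := exists_pos_next Adm p hp haAdm
    have hGbdd : BddAbove (Jopt Adm p C lam '' {y | 0 < p x a y}) :=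
      ((Set.toFinite {y | 0 < p x a y}).image _).bddAbove
    have hGle : ∀ y : S, 0 < p x a y →
        Jopt Adm p C lam y ≤ sSup (Jopt Adm p C lam '' {y | 0 < p x a y}) :=
      fun y hy => le_csSup hGbdd (Set.mem_image_of_mem _ hy)
    refine le_of_forall_gt_imp_ge_of_dense fun c hc => ?_
    set G := sSup (Jopt Adm p C lam '' {y | 0 < p x a y}) with hGdef
    set ε := (c - G) / 2 with hεdef
    have hε : 0 < ε := by rw [hεdef]; linarith
    have hGεc : G + ε < c := by rw [hεdef]; linarith
    have hchoice : ∀ y : S, ∃ π : Policy S A Adm,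
        Javg Adm p C lam π y < Jopt Adm p C lam y + ε := by
      intro y
      refine exists_lt_of_ciInf_lt ?_
      rw [← hJopt_eq]
      exact lt_add_of_pos_right _ hε
    choose Ps hPs using hchoice
    set a₀ : S → A := fun s => if s = x then a else (hA s).choose with ha₀def
    have h₀ : ∀ s, a₀ s ∈ Adm s := by
      intro s
      simp only [ha₀def]
      split
      · next hs => subst hs; exact haAdm
      · exact (hA s).choose_spec
    have ha₀x : a₀ x = a := by simp only [ha₀def, if_pos rfl]
    set κ := compose Adm a₀ h₀ Ps with hκdef
    set W : ℕ → ℝ := fun n =>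
      (1 / lam) * Real.log (∑ y, p x a y * Sn Adm p lam C (Ps y) y n) with hWdef
    have hTpos : ∀ n : ℕ, 0 < ∑ y, p x a y * Sn Adm p lam C (Ps y) y n := by
      intro n
      refine Finset.sum_pos' (fun y _ => mul_nonneg (hp0 y)
        (Sn_pos Adm p lam hp C n (Ps y) y).le) ⟨y0, Finset.mem_univ y0, ?_⟩
      exact mul_pos hy0 (Sn_pos Adm p lam hp C n (Ps y0) y0)
    have hrec : ∀ n : ℕ, Jn Adm p C lam κ x (n + 1) ≤ C x a + W n := by
      intro n
      have hS : Sn Adm p lam C κ x (n + 1)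
          = Real.exp (lam * C x a) * ∑ y, p x a y * Sn Adm p lam C (Ps y) y n := by
        rw [hκdef, Sn_succ_compose, ha₀x]
      rw [Jn_eq, hS, Real.log_mul (Real.exp_pos _).ne' (hTpos n).ne', Real.log_exp, hWdef]
      rw [mul_add]
      have h7 : (1 / lam) * (lam * C x a) = C x a := by field_simp
      rw [h7]
    have hev : ∀ b' : ℝ, G + ε < b' → ∀ᶠ n : ℕ in Filter.atTop, W n ≤ b' * n := by
      intro b' hb'
      set b2 := (G + ε + b') / 2 with hb2def
      have hb2a : G + ε < b2 := by rw [hb2def]; linarith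
      have hb2b : b2 < b' := by rw [hb2def]; linarith
      have h1 : ∀ y : S, ∀ᶠ n : ℕ in Filter.atTop,
          (0 < p x a y → Jn Adm p C lam (Ps y) y n / n < b2) := by
        intro y
        by_cases hy : 0 < p x a y
        · have hlim : Filter.limsup (fun n : ℕ => Jn Adm p C lam (Ps y) y n / n)
              Filter.atTop < b2 := by
            rw [← hJavg_eq]
            calc Javg Adm p C lam (Ps y) y < Jopt Adm p C lam y + ε := hPs y
              _ ≤ G + ε := by have := hGle y hy; linarith
              _ < b2 := hb2a
          exact (Filter.eventually_lt_of_limsup_lt hlim (hub (Ps y) y)).mono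
            fun n h _ => h
        · exact Filter.Eventually.of_forall fun n h => absurd h hy
      have hall := Filter.eventually_all.mpr h1
      have hone : ∀ᶠ n : ℕ in Filter.atTop, 1 ≤ n := Filter.eventually_ge_atTop 1
      filter_upwards [hall, hone] with n hn hn1
      have hnpos : (0 : ℝ) < n := by exact_mod_cast hn1
      have hTle : (∑ y, p x a y * Sn Adm p lam C (Ps y) y n)
          ≤ Real.exp (lam * (b2 * n)) := by
        calc (∑ y, p x a y * Sn Adm p lam C (Ps y) y n)
            ≤ ∑ y, p x a y * Real.exp (lam * (b2 * n)) := by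
              refine Finset.sum_le_sum fun y _ => ?_
              by_cases hy : 0 < p x a y
              · refine mul_le_mul_of_nonneg_left ?_ (hp0 y)
                have hJn : Jn Adm p C lam (Ps y) y n < b2 * n := by
                  have := hn y hy
                  rw [div_lt_iff₀ hnpos] at this
                  linarith
                have hlogS : Real.log (Sn Adm p lam C (Ps y) y n) = lam *
                    Jn Adm p C lam (Ps y) y n := by
                  rw [Jn_eq]
                  field_simp
                have hSpos := Sn_pos Adm p lam hp C n (Ps y) y
                rw [← Real.exp_log hSpos, hlogS]
                refine (Real.exp_le_exp.mpr ?_)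
                exact mul_le_mul_of_nonneg_left hJn.le hlam.le
              · have hy0' : p x a y = 0 := le_antisymm (not_lt.mp hy) (hp0 y)
                rw [hy0']
                simp
          _ = Real.exp (lam * (b2 * n)) := by
              rw [← Finset.sum_mul, (hp x a haAdm).2, one_mul]
      have hWle : W n ≤ b2 * n := by
        rw [hWdef]
        have hlog : Real.log (∑ y, p x a y * Sn Adm p lam C (Ps y) y n)
            ≤ lam * (b2 * n) := by
          have := Real.log_le_log (hTpos n) hTle
          rwa [Real.log_exp] at this
        calc (1 / lam) * Real.log (∑ y, p x a y * Sn Adm p lam C (Ps y) y n)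
            ≤ (1 / lam) * (lam * (b2 * n)) := mul_le_mul_of_nonneg_left hlog (by positivity)
          _ = b2 * n := by field_simp
      calc W n ≤ b2 * n := hWle
        _ ≤ b' * n := mul_le_mul_of_nonneg_right hb2b.le (by positivity)
    have hfin := limsup_step_le (fun n => Jn Adm p C lam κ x n) W (C x a) (G + ε)
      hrec hev (hcb_le κ x)
    have hκx : Jopt Adm p C lam x ≤ Javg Adm p C lam κ x := by
      rw [hJopt_eq]
      exact ciInf_le (hbddJ x) κ
    rw [hJavg_eq] at hκx
    calc Jopt Adm p C lam x ≤ _ := hκx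
      _ ≤ G + ε := hfin
      _ ≤ c := hGεc.le
  exact le_antisymm dirB dirA

end RiskSensitive
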